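/- Let α, β, γ, t be complex numbers with t ≠ 0. There exists a complex constant C (depending only on α, β, γ, t) such that for all complex q ≠ 0 and all complex p: t·H̃V(α,β,γ;t; 1 − 1/q, q(pq − γ)) = t·HV(β+γ, α+β, −β; t; q, p) + C. In other words, the canonical transformation q ↦ 1 − 1/q, p ↦ q(pq − γ) changes the Hamiltonian H̃V(α,β,γ;t;·,·) into the biquadratic Hamiltonian HV(β+γ, α+β, −β;t;·,·) up to an additive quantity independent of the canonical variables. -/

import Mathlib

open Filter Topology

/-- `t·HV(a,b,c;t;q,p)` : the (t-multiplied) fifth Painlevé Hamiltonian. -/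
noncomputable def tHV (a b c t q p : ℂ) : ℂ :=
  p * (p + t) * q * (q - 1) + b * p * q + c * p - (a + c) * t * q

/-- `t·H̃V(a,b,c;t;q,p)` : the alternative (t-multiplied) fifth Painlevé Hamiltonian. -/
noncomputable def tHtV (a b c t q p : ℂ) : ℂ :=
  q * (q - 1) ^ 2 * p ^ 2 + ((1 - q) * (a + (b + 2 * c) * q) + t * q) * p
    - c * (b + c) * (1 - q)

/-- The canonical transformation `q ↦ 1 − 1/q`, `p ↦ q(pq − γ)` changes `H̃V(α,β,γ)` into
`HV(β+γ, α+β, −β)` up to an additive quantity independent of the canonical variables. -/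
theorem stmt0 (α β γ t : ℂ) (ht : t ≠ 0) :
    ∃ C : ℂ, ∀ q p : ℂ, q ≠ 0 →
      tHtV α β γ t (1 - 1 / q) (q * (p * q - γ)) =
        tHV (β + γ) (α + β) (-β) t q p + C := by
  use γ * (t - α - β - γ)
  intro q p hq
  have h : (1:ℂ) - 1/q = (q-1)/q := by field_simp
  rw [tHtV, tHV, h]
  field_simp
  have h7 : q ^ 7 * (q⁻¹) ^ 7 = 1 := by
    rw [inv_pow]; exact mul_inv_cancel₀ (pow_ne_zero 7 hq)
  ring
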